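/- The total residue map res_D : Ω¹_{D̂}(*D) / {dφ̂ − ι_{D̂}η : φ̂ ∈ O_{D̂}(*D), η ∈ Ω¹(U)} → ℂ, induced by μ̂ ↦ Σ_{x∈D} res_x μ̂, is well-defined and is an isomorphism, identifying H²_{dR,c}(U) with ℂ for U = X∖D the complement of a nonempty finite set in a smooth projective curve X over ℂ. -/

import Mathlib

/-!
Statement 19 (Example 3.7 of the paper): for `U = X ∖ D` the complement of a
nonempty finite set `D` in a smooth projective curve `X` over `ℂ` (here
`X = ℙ¹`, with coordinates chosen so that `D = S ⊆ 𝔸¹ = ℂ`), the total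
residue map
`res_D : Ω¹_{D̂}(*D) / {dφ̂ - ι_{D̂}η : φ̂ ∈ O_{D̂}(*D), η ∈ Ω¹(U)} → ℂ`,
induced by `μ̂ ↦ Σ_{x∈D} res_x μ̂`, is well defined and is an isomorphism,
identifying `H²_{dR,c}(U)` with `ℂ`.

`Ω¹_{D̂}(*D) = ⊕_{s∈S} ℂ((z_s)) dz_s` is realized as families of Laurent
series (`z_s = z - s`), `O_{D̂}(*D)` likewise, `d` is the componentwise formal
derivative, and `Ω¹(U)` consists of the rational 1-forms `f dz` with poles
only in `S` (including at infinity, i.e. `f` vanishes to order `≥ 2` at `∞`);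
`ι_{D̂}` is the Laurent expansion at each point of `S`.  Well-definedness,
injectivity and surjectivity are stated without forming the quotient.
-/

noncomputable section

namespace Stmt19

open Polynomial

/-- the componentwise formal derivative of a Laurent series -/
def lder (f : LaurentSeries ℂ) : LaurentSeries ℂ where
  coeff n := ((n + 1 : ℤ) : ℂ) * f.coeff (n + 1)
  isPWO_support' := by
    refine ((f.isPWO_support').image_of_monotone
      (f := fun n : ℤ => n - 1) fun a b h => sub_le_sub_right h 1).mono ?_
    intro n hn
    have h1 : f.coeff (n + 1) ≠ 0 := by
      intro h
      apply hn
      simp [Function.mem_support, h]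
    exact ⟨n + 1, h1, by ring⟩

/-- translation `z ↦ z + s` on rational functions -/
def translate (s : ℂ) : RatFunc ℂ →+* RatFunc ℂ :=
  RatFunc.liftRingHom
    ((algebraMap (Polynomial ℂ) (RatFunc ℂ)).comp
      (Polynomial.aeval (Polynomial.X + Polynomial.C s)).toRingHom)
    (by
      intro p hp
      have hp0 : p ≠ 0 := nonZeroDivisors.ne_zero hp
      have h1 : Polynomial.aeval (Polynomial.X + Polynomial.C s) p ≠ 0 := by
        intro h
        exact hp0 (Polynomial.taylor_injective s
          (by rw [Polynomial.taylor_apply, Polynomial.comp_eq_aeval, h,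
            Polynomial.taylor_apply, Polynomial.zero_comp]))
      exact mem_nonZeroDivisors_of_ne_zero
        (RatFunc.algebraMap_ne_zero h1))

variable (S : Finset ℂ)

/-- `Ω¹_{D̂}(*D) = ⊕_{s ∈ S} ℂ((z_s)) dz_s` (and likewise `O_{D̂}(*D)`):
families of Laurent series indexed by the points of `D = S` -/
abbrev FormalForms := {s : ℂ // s ∈ S} → LaurentSeries ℂ

/-- the Laurent expansion of a rational function at the points of `S`
(in the local coordinates `z_s = z - s`) -/
def expand (f : RatFunc ℂ) : FormalForms S :=
  fun s => ((translate s.1 f : RatFunc ℂ) : LaurentSeries ℂ)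

/-- `η = f dz` is a global algebraic 1-form on `U = ℙ¹ ∖ S`: its poles lie in
`S` and it has no pole at `∞` (a zero of order `≥ 2` of `f`) -/
def IsFormOnU (f : RatFunc ℂ) : Prop :=
  (∀ a : ℂ, f.denom.IsRoot a → a ∈ S) ∧ f.num.degree + 2 ≤ f.denom.degree

/-- the subspace `{dφ̂ - ι_{D̂} η}` of `Ω¹_{D̂}(*D)` -/
def coboundaries : Set (FormalForms S) :=
  {μ | ∃ (φ : FormalForms S) (f : RatFunc ℂ), IsFormOnU S f ∧
    μ = (fun s => lder (φ s)) - expand S f}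

/-- the total residue `Σ_{x ∈ D} res_x` -/
def res (μ : FormalForms S) : ℂ := ∑ s : {s : ℂ // s ∈ S}, (μ s).coeff (-1)

lemma translate_div (s : ℂ) (p q : ℂ[X]) :
    translate s (algebraMap ℂ[X] (RatFunc ℂ) p / algebraMap ℂ[X] (RatFunc ℂ) q) =
      algebraMap ℂ[X] (RatFunc ℂ) (aeval (X + C s) p) /
        algebraMap ℂ[X] (RatFunc ℂ) (aeval (X + C s) q) := by
  exact RatFunc.liftRingHom_apply_div _ _ p q

lemma translate_algebraMap (s : ℂ) (p : ℂ[X]) :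
    translate s (algebraMap ℂ[X] (RatFunc ℂ) p) =
      algebraMap ℂ[X] (RatFunc ℂ) (aeval (X + C s) p) := by
  have := translate_div s p 1
  simpa using this

/-- residue of a rational function at a point -/
def resAt (s : ℂ) (f : RatFunc ℂ) : ℂ :=
  ((translate s f : RatFunc ℂ) : LaurentSeries ℂ).coeff (-1)

lemma resAt_regular {q : ℂ[X]} (hq : q.coeff 0 ≠ 0) (p : ℂ[X]) :
    (((algebraMap ℂ[X] (RatFunc ℂ) p / algebraMap ℂ[X] (RatFunc ℂ) q : RatFunc ℂ)
      : LaurentSeries ℂ)).coeff (-1) = 0 := by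
  have hu : IsUnit (q : PowerSeries ℂ) := by
    rw [PowerSeries.isUnit_iff_constantCoeff]
    simpa using hq.isUnit
  obtain ⟨u, hu⟩ := hu
  have hcoe : ((algebraMap ℂ[X] (RatFunc ℂ) q : RatFunc ℂ) : LaurentSeries ℂ) =
      ((q : PowerSeries ℂ) : LaurentSeries ℂ) := (RatFunc.coe_coe q).symm
  have hinv : ((((u⁻¹ : (PowerSeries ℂ)ˣ) : PowerSeries ℂ)) : LaurentSeries ℂ) =
      (((q : PowerSeries ℂ) : LaurentSeries ℂ))⁻¹ := by
    refine eq_inv_of_mul_eq_one_left ?_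
    rw [← PowerSeries.coe_mul, ← hu, u.inv_mul, PowerSeries.coe_one]
  have hcoep : ((algebraMap ℂ[X] (RatFunc ℂ) p : RatFunc ℂ) : LaurentSeries ℂ) =
      ((p : PowerSeries ℂ) : LaurentSeries ℂ) := (RatFunc.coe_coe p).symm
  rw [map_div₀, hcoe, hcoep, div_eq_mul_inv, ← hinv, ← PowerSeries.coe_mul,
    PowerSeries.coeff_coe]
  simp


lemma taylor_coeff_of_le {p : ℂ[X]} {k : ℕ} (h : p.natDegree ≤ k) (c : ℂ) :
    (taylor c p).coeff k = p.coeff k := by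
  rw [taylor_coeff]
  have hh : hasseDeriv k p = C (p.coeff k) := by
    ext n
    rw [hasseDeriv_coeff, coeff_C]
    rcases Nat.eq_zero_or_pos n with hn | hn
    · subst hn; simp
    · have : p.coeff (n + k) = 0 :=
        coeff_eq_zero_of_natDegree_lt (lt_of_le_of_lt h (by omega))
      simp [this, if_neg hn.ne']
  rw [hh, eval_C]

lemma single_X_pow (m : ℕ) :
    (((X : ℂ[X]) ^ m : ℂ[X]) : PowerSeries ℂ) = PowerSeries.X ^ m := by
  push_cast
  ring

/-- residue of `r / (X - s)^m` at `s` -/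
lemma resAt_pole (s : ℂ) (r : ℂ[X]) (m : ℕ) (hm : 0 < m) :
    resAt s (algebraMap ℂ[X] (RatFunc ℂ) r /
      algebraMap ℂ[X] (RatFunc ℂ) ((X - C s) ^ m)) = (taylor s r).coeff (m - 1) := by
  rw [resAt, translate_div]
  have h1 : aeval (X + C s) ((X - C s) ^ m : ℂ[X]) = (X : ℂ[X]) ^ m := by
    rw [map_pow]
    simp
  rw [h1]
  have hX : (((algebraMap ℂ[X] (RatFunc ℂ)) ((X : ℂ[X]) ^ m) : RatFunc ℂ) : LaurentSeries ℂ)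
      = HahnSeries.single (m : ℤ) 1 := by
    have hX0 : (((algebraMap ℂ[X] (RatFunc ℂ)) ((X : ℂ[X]) ^ m) : RatFunc ℂ)
        : LaurentSeries ℂ) = ((((X : ℂ[X]) ^ m : ℂ[X]) : PowerSeries ℂ) : LaurentSeries ℂ) :=
      (RatFunc.coe_coe _).symm
    rw [hX0, single_X_pow, PowerSeries.coe_pow, PowerSeries.coe_X, HahnSeries.single_pow]
    simp
  have hXinv : ((((algebraMap ℂ[X] (RatFunc ℂ)) ((X : ℂ[X]) ^ m) : RatFunc ℂ)
        : LaurentSeries ℂ))⁻¹ = HahnSeries.single (-(m : ℤ)) 1 := by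
    rw [hX]
    refine (eq_inv_of_mul_eq_one_left ?_).symm
    rw [HahnSeries.single_mul_single]
    have h2 : -(m : ℤ) + (m : ℤ) = 0 := by ring
    rw [h2, mul_one, HahnSeries.single_zero_one]
  have hr : ((((algebraMap ℂ[X] (RatFunc ℂ)) (aeval (X + C s) r) : RatFunc ℂ)
      : LaurentSeries ℂ)) = (((aeval (X + C s) r : ℂ[X]) : PowerSeries ℂ) : LaurentSeries ℂ) :=
    (RatFunc.coe_coe _).symm
  rw [map_div₀, div_eq_mul_inv, hXinv, hr]
  have key : ((((aeval (X + C s) r : ℂ[X]) : PowerSeries ℂ) : LaurentSeries ℂ) *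
      HahnSeries.single (-(m : ℤ)) 1).coeff (-1) =
      (((aeval (X + C s) r : ℂ[X]) : PowerSeries ℂ) : LaurentSeries ℂ).coeff ((m : ℤ) - 1) := by
    have : (-1 : ℤ) = ((m : ℤ) - 1) + (-(m : ℤ)) := by ring
    rw [this, HahnSeries.coeff_mul_single_add, mul_one]
  rw [key, PowerSeries.coeff_coe]
  rw [if_neg (by omega)]
  have hnat : ((m : ℤ) - 1).natAbs = m - 1 := by omega
  rw [hnat, Polynomial.coeff_coe, taylor_apply, comp_eq_aeval]

/-- coefficient extraction from a product with a monic polynomial -/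
lemma coeff_mul_monic {p q : ℂ[X]} {k : ℕ} (hp : p.natDegree ≤ k) (hq : q.Monic) :
    (p * q).coeff (k + q.natDegree) = p.coeff k := by
  rw [coeff_mul]
  rw [Finset.sum_eq_single (k, q.natDegree)]
  · rw [hq.coeff_natDegree, mul_one]
  · rintro ⟨i, j⟩ hmem hne
    rw [Finset.HasAntidiagonal.mem_antidiagonal] at hmem
    rcases lt_or_ge k i with hi | hi
    · exact mul_eq_zero_of_left (coeff_eq_zero_of_natDegree_lt (lt_of_le_of_lt hp hi)) _
    · have hj : q.natDegree < j := by
        rcases lt_or_eq_of_le hi with h | h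
        · omega
        · subst h
          exfalso; exact hne (by simp at hmem ⊢; omega)
      exact mul_eq_zero_of_right _ (coeff_eq_zero_of_natDegree_lt hj)
  · intro h
    simp [Finset.mem_antidiagonal] at h


lemma resAt_zero (s : ℂ) : resAt s 0 = 0 := by
  simp [resAt, map_zero]

lemma resAt_add (s : ℂ) (f g : RatFunc ℂ) : resAt s (f + g) = resAt s f + resAt s g := by
  simp [resAt, map_add, HahnSeries.coeff_add]

lemma resAt_sum {ι : Type*} (T : Finset ι) (F : ι → RatFunc ℂ) (s : ℂ) :
    resAt s (∑ i ∈ T, F i) = ∑ i ∈ T, resAt s (F i) := by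
  classical
  induction T using Finset.induction_on with
  | empty => simp [resAt_zero]
  | insert _ _ h ih => rw [Finset.sum_insert h, Finset.sum_insert h, resAt_add, ih]

lemma resAt_of_eval_ne {s : ℂ} {q : ℂ[X]} (hq : q.eval s ≠ 0) (p : ℂ[X]) :
    resAt s (algebraMap ℂ[X] (RatFunc ℂ) p / algebraMap ℂ[X] (RatFunc ℂ) q) = 0 := by
  rw [resAt, translate_div]
  refine resAt_regular ?_ _
  rw [coeff_zero_eq_eval_zero, ← comp_eq_aeval, eval_comp]
  simpa using hq

lemma resAt_eq_zero_of_not_root {s : ℂ} {f : RatFunc ℂ} (h : f.denom.eval s ≠ 0) :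
    resAt s f = 0 := by
  rw [← f.num_div_denom]
  exact resAt_of_eval_ne h _

theorem residue_theorem {f : RatFunc ℂ} (hdeg : f.num.degree + 2 ≤ f.denom.degree)
    {S : Finset ℂ} (hroots : ∀ a : ℂ, f.denom.IsRoot a → a ∈ S) :
    ∑ s ∈ S, resAt s f = 0 := by
  classical
  by_cases hf0 : f = 0
  · subst hf0; simp [resAt_zero]
  set D := f.denom with hDdef
  have hD : D.Monic := f.monic_denom
  have hD0 : D ≠ 0 := hD.ne_zero
  set N := f.num with hNdef
  have hN0 : N ≠ 0 := by simpa [hNdef] using f.num_ne_zero hf0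
  set T := D.roots.toFinset with hTdef
  set m : ℂ → ℕ := fun a => D.roots.count a with hmdef
  set g : ℂ → ℂ[X] := fun a => (X - C a) ^ m a with hgdef
  have hDfact : D = ∏ a ∈ T, g a := by
    conv_lhs => rw [(IsAlgClosed.splits D).eq_prod_roots_of_monic hD]
    rw [Finset.prod_multiset_map_count]
  have hmpos : ∀ a ∈ T, 0 < m a := by
    intro a ha
    rw [hTdef, Multiset.mem_toFinset] at ha
    exact Multiset.count_pos.mpr ha
  have hT : T ⊆ S := by
    intro a ha
    rw [hTdef, Multiset.mem_toFinset, mem_roots hD0] at ha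
    exact hroots a ha
  have hg : ∀ a ∈ T, (g a).Monic := fun a _ => (monic_X_sub_C a).pow _
  have hcop : (T : Set ℂ).Pairwise fun a b => IsCoprime (g a) (g b) := by
    intro a _ b _ hab
    exact (isCoprime_X_sub_C_of_isUnit_sub (sub_ne_zero.2 hab).isUnit).pow
  obtain ⟨q, r, hdegr, heq0⟩ := div_prod_eq_quo_add_sum_rem_div (RatFunc ℂ) N hg hcop
  set A := algebraMap ℂ[X] (RatFunc ℂ) with hAdef
  have heq : A N / ∏ a ∈ T, A (g a) = A q + ∑ a ∈ T, A (r a) / A (g a) := heq0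
  have hprodD : ∏ a ∈ T, A (g a) = A D := by rw [← map_prod, ← hDfact]
  have hfeq : f = A q + ∑ a ∈ T, A (r a) / A (g a) := by
    rw [← heq, hprodD, hAdef, RatFunc.num_div_denom]
  set E : ℂ → ℂ[X] := fun a => ∏ b ∈ T.erase a, g b with hEdef
  have hgE : ∀ a ∈ T, g a * E a = D := by
    intro a ha
    rw [hEdef, hDfact, Finset.mul_prod_erase _ _ ha]
  have hgne : ∀ a ∈ T, A (g a) ≠ 0 := fun a ha => RatFunc.algebraMap_ne_zero (hg a ha).ne_zero
  have hADne : A D ≠ 0 := RatFunc.algebraMap_ne_zero hD0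
  have hKey : A N = A (q * D + ∑ a ∈ T, r a * E a) := by
    have h1 : A N = (A q + ∑ a ∈ T, A (r a) / A (g a)) * A D := by
      rw [← heq, hprodD, div_mul_cancel₀ _ hADne]
    rw [h1, map_add, map_mul, map_sum, add_mul, Finset.sum_mul]
    congr 1
    refine Finset.sum_congr rfl fun a ha => ?_
    rw [map_mul, ← hgE a ha, map_mul, ← mul_assoc, div_mul_cancel₀ _ (hgne a ha)]
  have hpoly : N = q * D + ∑ a ∈ T, r a * E a :=
    IsFractionRing.injective ℂ[X] (RatFunc ℂ) hKey
  have hEmon : ∀ a ∈ T, (E a).Monic :=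
    fun a _ => monic_prod_of_monic _ _ fun b hb => hg b (Finset.mem_of_mem_erase hb)
  have hbot : (⊥ : WithBot ℕ) < D.degree := by
    rw [bot_lt_iff_ne_bot]
    intro h
    exact hD0 (degree_eq_bot.mp h)
  have hsumlt : ∀ a ∈ T, (r a * E a).degree < D.degree := by
    intro a ha
    rcases eq_or_ne (r a) 0 with h0 | h0
    · rw [h0, zero_mul, degree_zero]; exact hbot
    · rw [← hgE a ha, degree_mul, degree_mul]
      refine WithBot.add_lt_add_right ?_ (hdegr a ha)
      rw [Ne, degree_eq_bot]
      exact (hEmon a ha).ne_zero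
  have hSumltD : (∑ a ∈ T, r a * E a).degree < D.degree :=
    lt_of_le_of_lt (degree_sum_le _ _) ((Finset.sup_lt_iff hbot).mpr hsumlt)
  have hnat : N.natDegree + 2 ≤ D.natDegree := by
    rw [degree_eq_natDegree hN0, degree_eq_natDegree hD0] at hdeg
    exact_mod_cast hdeg
  have hNltD : N.degree < D.degree := by
    rw [degree_eq_natDegree hN0, degree_eq_natDegree hD0]
    exact_mod_cast by omega
  have hq0 : q = 0 := by
    by_contra hq
    have h1 : q * D = N - ∑ a ∈ T, r a * E a := by rw [hpoly]; ring
    have h2 : (N - ∑ a ∈ T, r a * E a).degree < D.degree :=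
      lt_of_le_of_lt (degree_sub_le _ _) (max_lt hNltD hSumltD)
    have h3 : D.degree ≤ (q * D).degree := by
      rw [degree_mul]
      exact le_add_of_nonneg_left (zero_le_degree_iff.mpr hq)
    rw [h1] at h3
    exact absurd (lt_of_le_of_lt h3 h2) (lt_irrefl _)
  set n := D.natDegree with hndef
  have hn_sum : ∑ a ∈ T, m a = n := by
    have h1 : D.natDegree = ∑ a ∈ T, (g a).natDegree := by
      rw [hDfact, natDegree_prod _ _ fun a ha => (hg a ha).ne_zero]
    have h2 : ∀ a ∈ T, (g a).natDegree = m a := by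
      intro a _
      rw [hgdef]
      simp [natDegree_pow]
    rw [hndef, h1]
    exact (Finset.sum_congr rfl h2).symm
  have hE_deg : ∀ a ∈ T, (E a).natDegree = n - m a := by
    intro a ha
    have h1 : (g a).natDegree + (E a).natDegree = n := by
      rw [← natDegree_mul (hg a ha).ne_zero (hEmon a ha).ne_zero, hgE a ha]
    have h2 : (g a).natDegree = m a := by rw [hgdef]; simp [natDegree_pow]
    omega
  have hr_deg : ∀ a ∈ T, (r a).natDegree ≤ m a - 1 := by
    intro a ha
    rcases eq_or_ne (r a) 0 with h0 | h0
    · simp [h0]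
    · have h1 := hdegr a ha
      rw [degree_eq_natDegree h0, degree_eq_natDegree (hg a ha).ne_zero] at h1
      have h2 : (g a).natDegree = m a := by rw [hgdef]; simp [natDegree_pow]
      have h3 : (r a).natDegree < m a := by rw [← h2]; exact_mod_cast h1
      omega
  have hmleq : ∀ a ∈ T, m a ≤ n := by
    intro a ha
    rw [← hn_sum]
    exact Finset.single_le_sum (fun _ _ => Nat.zero_le _) ha
  have hcoeff : ∀ a ∈ T, (r a * E a).coeff (n - 1) = (r a).coeff (m a - 1) := by
    intro a ha
    have h1 : (m a - 1) + (E a).natDegree = n - 1 := by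
      rw [hE_deg a ha]
      have := hmpos a ha
      have := hmleq a ha
      omega
    rw [← h1, coeff_mul_monic (hr_deg a ha) (hEmon a ha)]
  have hNcoeff : N.coeff (n - 1) = 0 :=
    coeff_eq_zero_of_natDegree_lt (by omega)
  have hsum_r : ∑ a ∈ T, (r a).coeff (m a - 1) = 0 := by
    have h1 : N.coeff (n - 1) = ∑ a ∈ T, (r a * E a).coeff (n - 1) := by
      rw [hpoly, hq0, zero_mul, zero_add, finset_sum_coeff]
    rw [hNcoeff] at h1
    rw [← Finset.sum_congr rfl hcoeff]
    exact h1.symm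
  have hres_T : ∀ s ∈ T, resAt s f = (r s).coeff (m s - 1) := by
    intro s hs
    rw [hfeq, resAt_add, resAt_sum, hq0, map_zero, resAt_zero, zero_add]
    rw [Finset.sum_eq_single s]
    · rw [hgdef]
      rw [resAt_pole s (r s) (m s) (hmpos s hs), taylor_coeff_of_le (hr_deg s hs) s]
    · intro a ha hne
      apply resAt_of_eval_ne
      rw [hgdef]
      simp only [eval_pow, eval_sub, eval_X, eval_C]
      exact pow_ne_zero _ (sub_ne_zero.mpr (Ne.symm hne))
    · intro h
      exact absurd hs h
  calc ∑ s ∈ S, resAt s f = ∑ s ∈ T, resAt s f := by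
        refine (Finset.sum_subset hT fun s _ hsT => ?_).symm
        refine resAt_eq_zero_of_not_root fun h => ?_
        exact hsT (Multiset.mem_toFinset.mpr ((mem_roots hD0).mpr h))
    _ = ∑ s ∈ T, (r s).coeff (m s - 1) := Finset.sum_congr rfl hres_T
    _ = 0 := hsum_r


/-- formal antiderivative -/
def antider (g : LaurentSeries ℂ) : LaurentSeries ℂ where
  coeff n := if n = 0 then 0 else g.coeff (n - 1) / (n : ℂ)
  isPWO_support' := by
    refine ((g.isPWO_support').image_of_monotone
      (f := fun n : ℤ => n + 1) fun a b h => by dsimp only; omega).mono ?_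
    intro n hn
    have h1 : g.coeff (n - 1) ≠ 0 := by
      intro h
      apply hn
      simp [Function.mem_support, h]
    exact ⟨n - 1, h1, by ring⟩

lemma lder_antider {g : LaurentSeries ℂ} (hg : g.coeff (-1) = 0) : lder (antider g) = g := by
  ext n
  show ((n + 1 : ℤ) : ℂ) * (antider g).coeff (n + 1) = g.coeff n
  rcases eq_or_ne n (-1) with hn | hn
  · subst hn
    norm_num [hg]
  · have h1 : (n + 1 : ℤ) ≠ 0 := by omega
    have h2 : ((n + 1 : ℤ) : ℂ) ≠ 0 := Int.cast_ne_zero.mpr h1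
    show ((n + 1 : ℤ) : ℂ) * (if n + 1 = 0 then 0 else g.coeff (n + 1 - 1) / ((n + 1 : ℤ) : ℂ))
        = g.coeff n
    rw [if_neg h1]
    have h3 : n + 1 - 1 = n := by ring
    rw [h3, mul_div_cancel₀ _ h2]

lemma resAt_elem_sum (S : Finset ℂ) (d : ℂ → ℂ) {t : ℂ} (ht : t ∈ S) :
    resAt t (∑ s ∈ S, algebraMap ℂ[X] (RatFunc ℂ) (C (d s)) /
      algebraMap ℂ[X] (RatFunc ℂ) (X - C s)) = d t := by
  classical
  rw [resAt_sum]
  rw [Finset.sum_eq_single t]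
  · have h1 : (X - C t : ℂ[X]) = (X - C t) ^ 1 := (pow_one _).symm
    rw [h1, resAt_pole t _ 1 one_pos, taylor_C]
    simp
  · intro s hs hne
    apply resAt_of_eval_ne
    simp only [eval_sub, eval_X, eval_C]
    exact sub_ne_zero.mpr (Ne.symm hne)
  · intro h
    exact absurd ht h


lemma isFormOnU_elem_sum (hS : S.Nonempty) (d : ℂ → ℂ) (hd : ∑ s ∈ S, d s = 0) :
    IsFormOnU S (∑ s ∈ S, algebraMap ℂ[X] (RatFunc ℂ) (C (d s)) /
      algebraMap ℂ[X] (RatFunc ℂ) (X - C s)) := by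
  classical
  set A := algebraMap ℂ[X] (RatFunc ℂ) with hAdef
  set Q : ℂ[X] := ∏ s ∈ S, (X - C s) with hQdef
  set P : ℂ[X] := ∑ s ∈ S, C (d s) * ∏ t ∈ S.erase s, (X - C t) with hPdef
  set f := ∑ s ∈ S, A (C (d s)) / A (X - C s) with hfdef
  have hQmon : Q.Monic := monic_prod_of_monic _ _ fun s _ => monic_X_sub_C s
  have hQ0 : Q ≠ 0 := hQmon.ne_zero
  have hEmon : ∀ s ∈ S, (∏ t ∈ S.erase s, (X - C t : ℂ[X])).Monic :=
    fun s _ => monic_prod_of_monic _ _ fun t _ => monic_X_sub_C t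
  have hfPQ : f = A P / A Q := by
    rw [hfdef, hPdef, map_sum, Finset.sum_div]
    refine Finset.sum_congr rfl fun s hs => ?_
    have hQfac : Q = (X - C s) * ∏ t ∈ S.erase s, (X - C t) :=
      (Finset.mul_prod_erase _ _ hs).symm
    rw [map_mul, hQfac, map_mul]
    rw [mul_comm (A (X - C s)) _, mul_comm (A (C (d s))) _, mul_div_mul_left]
    exact RatFunc.algebraMap_ne_zero (hEmon s hs).ne_zero
  have hEdeg : ∀ s ∈ S, (∏ t ∈ S.erase s, (X - C t : ℂ[X])).natDegree = S.card - 1 := by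
    intro s hs
    rw [natDegree_prod _ _ fun t _ => (monic_X_sub_C t).ne_zero]
    simp [Finset.card_erase_of_mem hs]
  constructor
  · intro a ha
    have hdvd : f.denom ∣ Q := (RatFunc.denom_dvd hQ0).mpr ⟨P, hfPQ⟩
    obtain ⟨c, hc⟩ := hdvd
    have hQa : Q.eval a = 0 := by
      rw [hc, eval_mul, ha, zero_mul]
    rw [hQdef, eval_prod, Finset.prod_eq_zero_iff] at hQa
    obtain ⟨t, htS, hval⟩ := hQa
    simp only [eval_sub, eval_X, eval_C, sub_eq_zero] at hval
    rwa [hval]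
  · by_cases hf0 : f = 0
    · rw [hf0]
      simp
    · have hnum0 : f.num ≠ 0 := RatFunc.num_ne_zero hf0
      have hden0 : f.denom ≠ 0 := f.denom_ne_zero
      have hP0 : P ≠ 0 := by
        intro h
        apply hf0
        rw [hfPQ, h, map_zero, zero_div]
      have hcross : f.num * Q = P * f.denom := by
        apply IsFractionRing.injective ℂ[X] (RatFunc ℂ)
        rw [map_mul, map_mul]
        refine (div_eq_div_iff ?_ ?_).mp ?_
        · exact RatFunc.algebraMap_ne_zero hden0
        · exact RatFunc.algebraMap_ne_zero hQ0
        · rw [RatFunc.num_div_denom, hfPQ]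
      have hQdeg : Q.natDegree = S.card := by
        rw [hQdef, natDegree_prod _ _ fun t _ => (monic_X_sub_C t).ne_zero]
        simp
      have hPdeg : P.natDegree ≤ S.card - 1 := by
        rw [hPdef]
        refine natDegree_sum_le_of_forall_le _ _ fun s hs => ?_
        refine le_trans (natDegree_mul_le) ?_
        rw [natDegree_C, hEdeg s hs, zero_add]
      have hPcoeff : P.coeff (S.card - 1) = 0 := by
        rw [hPdef, finset_sum_coeff]
        have h1 : ∀ s ∈ S, (C (d s) * ∏ t ∈ S.erase s, (X - C t : ℂ[X])).coeff (S.card - 1)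
            = d s := by
          intro s hs
          rw [coeff_C_mul, ← hEdeg s hs, (hEmon s hs).coeff_natDegree, mul_one]
        rw [Finset.sum_congr rfl h1, hd]
      have hPne : P.natDegree ≠ S.card - 1 := by
        intro h
        apply hP0
        rw [← leadingCoeff_eq_zero, leadingCoeff, h, hPcoeff]
      have hcard : 1 ≤ S.card := Finset.card_pos.mpr hS
      have hdegs : f.num.natDegree + Q.natDegree = P.natDegree + f.denom.natDegree := by
        rw [← natDegree_mul hnum0 hQ0, ← natDegree_mul hP0 hden0, hcross]
      have hfinal : f.num.natDegree + 2 ≤ f.denom.natDegree := by omega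
      rw [degree_eq_natDegree hnum0, degree_eq_natDegree hden0]
      exact_mod_cast hfinal


theorem total_residue_identifies_H2c_with_C (hS : S.Nonempty) :
    -- `res_D` descends to the quotient `H²_{dR,c}(U)` …
    (∀ μ ∈ coboundaries S, res S μ = 0) ∧
    -- … and induces a bijection onto `ℂ`: injectivity …
    (∀ μ : FormalForms S, res S μ = 0 → μ ∈ coboundaries S) ∧
    -- … and surjectivity
    Function.Surjective (res S) := by
  classical
  refine ⟨?_, ?_, ?_⟩
  · rintro μ ⟨φ, f, hform, rfl⟩
    rw [res]
    have h1 : ∀ s : {s : ℂ // s ∈ S},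
        ((((fun s => lder (φ s)) - expand S f : FormalForms S)) s).coeff (-1)
          = -(resAt s.1 f) := by
      intro s
      rw [Pi.sub_apply, HahnSeries.coeff_sub]
      have h2 : (lder (φ s)).coeff (-1) = 0 := by
        show ((-1 + 1 : ℤ) : ℂ) * _ = 0
        norm_num
      rw [h2, zero_sub]
      rfl
    rw [Finset.sum_congr rfl fun s _ => h1 s, Finset.sum_neg_distrib,
      Finset.sum_coe_sort S fun s => resAt s f,
      residue_theorem hform.2 hform.1, neg_zero]
  · intro μ hres
    set c : ℂ → ℂ := fun s => if h : s ∈ S then (μ ⟨s, h⟩).coeff (-1) else 0 with hcdef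
    have hsum : ∑ s ∈ S, c s = 0 := by
      rw [← hres, res, ← Finset.sum_coe_sort S c]
      refine Finset.sum_congr rfl fun s _ => ?_
      rw [hcdef]
      simp [s.2]
    set d : ℂ → ℂ := fun s => -c s with hddef
    have hdsum : ∑ s ∈ S, d s = 0 := by
      rw [hddef]
      simp only [Finset.sum_neg_distrib, hsum, neg_zero]
    set f := ∑ s ∈ S, algebraMap ℂ[X] (RatFunc ℂ) (C (d s)) /
      algebraMap ℂ[X] (RatFunc ℂ) (X - C s) with hfdef
    have hform : IsFormOnU S f := isFormOnU_elem_sum S hS d hdsum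
    have hcoeff : ∀ s : {s : ℂ // s ∈ S}, (μ s + expand S f s).coeff (-1) = 0 := by
      intro s
      rw [HahnSeries.coeff_add]
      have h1 : (expand S f s).coeff (-1) = d s.1 := by
        show resAt s.1 f = d s.1
        rw [hfdef]
        exact resAt_elem_sum S d s.2
      have h2 : (μ s).coeff (-1) = c s.1 := by
        rw [hcdef]
        simp [s.2]
      rw [h1, h2, hddef]
      ring
    refine ⟨fun s => antider (μ s + expand S f s), f, hform, ?_⟩
    funext s
    rw [Pi.sub_apply, lder_antider (hcoeff s)]
    abel
  · intro cval
    obtain ⟨s₀, hs₀⟩ := hS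
    refine ⟨fun s => if s = ⟨s₀, hs₀⟩ then HahnSeries.single (-1) cval else 0, ?_⟩
    rw [res, Fintype.sum_eq_single (⟨s₀, hs₀⟩ : {s : ℂ // s ∈ S})]
    · rw [if_pos rfl, HahnSeries.coeff_single_same]
    · intro b hb
      rw [if_neg hb, HahnSeries.coeff_zero]

end Stmt19

end
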